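/- If a bus graph G = (B, C; E) admits a grid realization, then it admits a realization in which all event points (connectors and bus endpoints) have coordinates in {0, 1, ..., N−1} × {0, 1, ..., N−1}, where N = |C| + 2|B| is the total number of event points. Consequently, Bus Graph Realizability is in NP. -/

import Mathlib

/-- An axis-parallel closed grid segment. `coord` is the fixed coordinate
(the y-coordinate if horizontal, the x-coordinate if vertical), and the
segment spans from `lo` to `hi` in the other coordinate. -/
structure GridSeg where
  horiz : Bool
  coord : ℤ
  lo : ℤ
  hi : ℤ

/-- The set of grid points covered by a grid segment. -/
def GridSeg.pts (s : GridSeg) : Set (ℤ × ℤ) :=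
  if s.horiz then {p | p.2 = s.coord ∧ s.lo ≤ p.1 ∧ p.1 ≤ s.hi}
  else {p | p.1 = s.coord ∧ s.lo ≤ p.2 ∧ p.2 ≤ s.hi}

/-- The foot of the perpendicular from a point to the line of a grid segment. -/
def foot (c : ℤ × ℤ) (s : GridSeg) : ℤ × ℤ :=
  if s.horiz then (c.1, s.coord) else (s.coord, c.2)

/-- The closed segment from `c` to its perpendicular foot on the line of `s`. -/
def edgePts (c : ℤ × ℤ) (s : GridSeg) : Set (ℤ × ℤ) :=
  if s.horiz then {p | p.1 = c.1 ∧ min c.2 s.coord ≤ p.2 ∧ p.2 ≤ max c.2 s.coord}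
  else {p | p.2 = c.2 ∧ min c.1 s.coord ≤ p.1 ∧ p.1 ≤ max c.1 s.coord}

/-- A grid realization of a bus graph: buses are axis-parallel closed grid
segments, connectors are grid points, and each edge is drawn as a straight
segment from the connector, perpendicular to the bus it joins, containing no
other bus or connector; buses and connectors are pairwise non-intersecting. -/
structure Realization {B C : Type} (adj : C → Finset B) where
  bus : B → GridSeg
  conn : C → ℤ × ℤ
  bus_disjoint : ∀ b b' : B, b ≠ b' → Disjoint (bus b).pts (bus b').pts
  conn_inj : Function.Injective conn
  conn_off_bus : ∀ (c : C) (b : B), conn c ∉ (bus b).pts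
  edge_foot : ∀ c : C, ∀ b ∈ adj c, foot (conn c) (bus b) ∈ (bus b).pts
  edge_avoids_bus : ∀ c : C, ∀ b ∈ adj c, ∀ b' : B,
    ∀ p ∈ edgePts (conn c) (bus b), p ∈ (bus b').pts → b' = b
  edge_avoids_conn : ∀ c : C, ∀ b ∈ adj c, ∀ c' : C,
    conn c' ∈ edgePts (conn c) (bus b) → c' = c


namespace BusCompact

def rank (S : Finset ℤ) (x : ℤ) : ℤ := ((S.filter (fun y => y < x)).card : ℤ)

lemma rank_nonneg (S : Finset ℤ) (x : ℤ) : 0 ≤ rank S x := Int.natCast_nonneg _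

lemma rank_mono (S : Finset ℤ) : Monotone (rank S) := by
  intro a b hab
  unfold rank
  exact_mod_cast Finset.card_le_card
    (Finset.monotone_filter_right S (fun y _ hy => lt_of_lt_of_le hy hab))

lemma rank_lt_rank (S : Finset ℤ) {a b : ℤ} (ha : a ∈ S) (hab : a < b) :
    rank S a < rank S b := by
  have hss : S.filter (fun y => y < a) ⊂ S.filter (fun y => y < b) := by
    refine ⟨Finset.monotone_filter_right S (fun y _ hy => lt_trans hy hab), fun hsub => ?_⟩
    have h1 : a ∈ S.filter (fun y => y < b) := Finset.mem_filter.mpr ⟨ha, hab⟩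
    have h2 := hsub h1
    exact absurd (Finset.mem_filter.mp h2).2 (lt_irrefl a)
  unfold rank
  exact_mod_cast Finset.card_lt_card hss

lemma le_of_rank_le (S : Finset ℤ) {a b : ℤ} (hb : b ∈ S) (h : rank S a ≤ rank S b) : a ≤ b := by
  by_contra hab
  exact absurd h (not_le.mpr (rank_lt_rank S hb (not_le.mp hab)))

lemma eq_of_rank_eq (S : Finset ℤ) {a b : ℤ} (ha : a ∈ S) (hb : b ∈ S)
    (h : rank S a = rank S b) : a = b :=
  le_antisymm (le_of_rank_le S hb h.le) (le_of_rank_le S ha h.ge)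

lemma rank_lt_card (S : Finset ℤ) {a : ℤ} (ha : a ∈ S) : rank S a < (S.card : ℤ) := by
  have hss : S.filter (fun y => y < a) ⊂ S :=
    Finset.filter_ssubset.mpr ⟨a, ha, lt_irrefl a⟩
  unfold rank
  exact_mod_cast Finset.card_lt_card hss

lemma rank_map_min (S : Finset ℤ) (a b : ℤ) :
    rank S (min a b) = min (rank S a) (rank S b) := (rank_mono S).map_min

lemma rank_map_max (S : Finset ℤ) (a b : ℤ) :
    rank S (max a b) = max (rank S a) (rank S b) := (rank_mono S).map_max

lemma min_mem {a b : ℤ} {S : Finset ℤ} (ha : a ∈ S) (hb : b ∈ S) : min a b ∈ S := by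
  rcases min_choice a b with h | h <;> rw [h] <;> assumption

lemma max_mem {a b : ℤ} {S : Finset ℤ} (ha : a ∈ S) (hb : b ∈ S) : max a b ∈ S := by
  rcases max_choice a b with h | h <;> rw [h] <;> assumption


set_option linter.unusedSectionVars false

section Sets
variable {B C : Type} [Fintype B] [Fintype C] {adj : C → Finset B}

def xC (R : Realization adj) (b : B) : Finset ℤ :=
  if (R.bus b).hi < (R.bus b).lo then ∅
  else if (R.bus b).horiz then {(R.bus b).lo, (R.bus b).hi} else {(R.bus b).coord}

def yC (R : Realization adj) (b : B) : Finset ℤ :=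
  if (R.bus b).hi < (R.bus b).lo then ∅
  else if (R.bus b).horiz then {(R.bus b).coord} else {(R.bus b).lo, (R.bus b).hi}

noncomputable def Sx (R : Realization adj) : Finset ℤ :=
  (Finset.univ.image fun c : C => (R.conn c).1) ∪ Finset.univ.biUnion (xC R)

noncomputable def Sy (R : Realization adj) : Finset ℤ :=
  (Finset.univ.image fun c : C => (R.conn c).2) ∪ Finset.univ.biUnion (yC R)

variable (R : Realization adj)

lemma card_xC_le (b : B) : (xC R b).card ≤ 2 := by
  unfold xC
  split
  · simp
  split
  · exact (Finset.card_insert_le _ _).trans (by simp)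
  · simp

lemma card_yC_le (b : B) : (yC R b).card ≤ 2 := by
  unfold yC
  split
  · simp
  split
  · simp
  · exact (Finset.card_insert_le _ _).trans (by simp)

lemma card_Sx_le : (Sx R).card ≤ Fintype.card C + 2 * Fintype.card B := by
  unfold Sx
  refine (Finset.card_union_le _ _).trans (add_le_add ?_ ?_)
  · exact (Finset.card_image_le).trans (by simp)
  · refine (Finset.card_biUnion_le).trans ?_
    calc ∑ b : B, (xC R b).card ≤ ∑ _b : B, 2 := Finset.sum_le_sum fun b _ => card_xC_le R b
      _ = 2 * Fintype.card B := by simp [mul_comm]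

lemma card_Sy_le : (Sy R).card ≤ Fintype.card C + 2 * Fintype.card B := by
  unfold Sy
  refine (Finset.card_union_le _ _).trans (add_le_add ?_ ?_)
  · exact (Finset.card_image_le).trans (by simp)
  · refine (Finset.card_biUnion_le).trans ?_
    calc ∑ b : B, (yC R b).card ≤ ∑ _b : B, 2 := Finset.sum_le_sum fun b _ => card_yC_le R b
      _ = 2 * Fintype.card B := by simp [mul_comm]

lemma card_Sy_add_two_le {b : B} (hdeg : (R.bus b).hi < (R.bus b).lo) :
    (Sy R).card + 2 ≤ Fintype.card C + 2 * Fintype.card B := by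
  classical
  have h0 : yC R b = ∅ := by unfold yC; rw [if_pos hdeg]
  have hB : 1 ≤ Fintype.card B := Fintype.card_pos_iff.mpr ⟨b⟩
  have hsum : ∑ b' : B, (yC R b').card ≤ 2 * (Fintype.card B - 1) := by
    rw [← Finset.sum_erase_add _ _ (Finset.mem_univ b), h0]
    simp only [Finset.card_empty, add_zero]
    calc ∑ b' ∈ Finset.univ.erase b, (yC R b').card
        ≤ ∑ _b' ∈ Finset.univ.erase b, 2 := Finset.sum_le_sum fun b' _ => card_yC_le R b'
      _ = 2 * (Fintype.card B - 1) := by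
          rw [Finset.sum_const, Finset.card_erase_of_mem (Finset.mem_univ b)]
          simp [mul_comm]
  have hcard : (Sy R).card ≤ Fintype.card C + 2 * (Fintype.card B - 1) := by
    unfold Sy
    refine (Finset.card_union_le _ _).trans (add_le_add ?_ ?_)
    · exact (Finset.card_image_le).trans (by simp)
    · exact (Finset.card_biUnion_le).trans hsum
  omega

lemma connx_mem (c : C) : (R.conn c).1 ∈ Sx R :=
  Finset.mem_union_left _ (Finset.mem_image_of_mem _ (Finset.mem_univ c))

lemma conny_mem (c : C) : (R.conn c).2 ∈ Sy R :=
  Finset.mem_union_left _ (Finset.mem_image_of_mem _ (Finset.mem_univ c))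

lemma mem_Sx_of_xC {b : B} {a : ℤ} (h : a ∈ xC R b) : a ∈ Sx R :=
  Finset.mem_union_right _ (Finset.mem_biUnion.mpr ⟨b, Finset.mem_univ b, h⟩)

lemma mem_Sy_of_yC {b : B} {a : ℤ} (h : a ∈ yC R b) : a ∈ Sy R :=
  Finset.mem_union_right _ (Finset.mem_biUnion.mpr ⟨b, Finset.mem_univ b, h⟩)

variable {b : B}

lemma lo_mem_Sx (hnd : ¬ (R.bus b).hi < (R.bus b).lo) (hh : (R.bus b).horiz = true) :
    (R.bus b).lo ∈ Sx R := mem_Sx_of_xC R (by unfold xC; rw [if_neg hnd, if_pos hh]; simp)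

lemma hi_mem_Sx (hnd : ¬ (R.bus b).hi < (R.bus b).lo) (hh : (R.bus b).horiz = true) :
    (R.bus b).hi ∈ Sx R := mem_Sx_of_xC R (by unfold xC; rw [if_neg hnd, if_pos hh]; simp)

lemma coord_mem_Sy (hnd : ¬ (R.bus b).hi < (R.bus b).lo) (hh : (R.bus b).horiz = true) :
    (R.bus b).coord ∈ Sy R := mem_Sy_of_yC R (by unfold yC; rw [if_neg hnd, if_pos hh]; simp)

lemma coord_mem_Sx (hnd : ¬ (R.bus b).hi < (R.bus b).lo) (hh : (R.bus b).horiz = false) :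
    (R.bus b).coord ∈ Sx R := mem_Sx_of_xC R (by unfold xC; rw [if_neg hnd]; simp [hh])

lemma lo_mem_Sy (hnd : ¬ (R.bus b).hi < (R.bus b).lo) (hh : (R.bus b).horiz = false) :
    (R.bus b).lo ∈ Sy R := mem_Sy_of_yC R (by unfold yC; rw [if_neg hnd]; simp [hh])

lemma hi_mem_Sy (hnd : ¬ (R.bus b).hi < (R.bus b).lo) (hh : (R.bus b).horiz = false) :
    (R.bus b).hi ∈ Sy R := mem_Sy_of_yC R (by unfold yC; rw [if_neg hnd]; simp [hh])

lemma not_adj_of_deg {c : C} (hdeg : (R.bus b).hi < (R.bus b).lo) (hb : b ∈ adj c) : False := by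
  have h := R.edge_foot c b hb
  unfold foot GridSeg.pts at h
  cases hh : (R.bus b).horiz <;> simp [hh] at h <;> omega

end Sets
section Compress
variable {B C : Type} [Fintype B] [Fintype C] {adj : C → Finset B}

noncomputable def compress (R : Realization adj) : Realization adj where
  bus b :=
    if (R.bus b).hi < (R.bus b).lo then
      ⟨true, ((Sy R).card : ℤ), ((Fintype.equivFin B b : ℕ) : ℤ), ((Fintype.equivFin B b : ℕ) : ℤ)⟩
    else if (R.bus b).horiz then
      ⟨true, rank (Sy R) (R.bus b).coord, rank (Sx R) (R.bus b).lo, rank (Sx R) (R.bus b).hi⟩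
    else
      ⟨false, rank (Sx R) (R.bus b).coord, rank (Sy R) (R.bus b).lo, rank (Sy R) (R.bus b).hi⟩
  conn c := (rank (Sx R) (R.conn c).1, rank (Sy R) (R.conn c).2)
  bus_disjoint := by
    intro b b' hne
    rw [Set.disjoint_left]
    intro p hp hp'
    by_cases hd : (R.bus b).hi < (R.bus b).lo <;>
      by_cases hd' : (R.bus b').hi < (R.bus b').lo
    · -- both degenerate
      simp [GridSeg.pts, hd] at hp
      simp [GridSeg.pts, hd'] at hp'
      have hii : ((Fintype.equivFin B b : ℕ) : ℤ) = ((Fintype.equivFin B b' : ℕ) : ℤ) := by omega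
      exact hne ((Fintype.equivFin B).injective (Fin.ext (by exact_mod_cast hii)))
    · -- b degenerate, b' not
      simp [GridSeg.pts, hd] at hp
      cases hh' : (R.bus b').horiz
      · simp [GridSeg.pts, hd', hh'] at hp'
        have := rank_lt_card (Sy R) (hi_mem_Sy R hd' hh')
        omega
      · simp [GridSeg.pts, hd', hh'] at hp'
        have := rank_lt_card (Sy R) (coord_mem_Sy R hd' hh')
        omega
    · -- b' degenerate, b not
      simp [GridSeg.pts, hd'] at hp'
      cases hh : (R.bus b).horiz
      · simp [GridSeg.pts, hd, hh] at hp
        have := rank_lt_card (Sy R) (hi_mem_Sy R hd hh)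
        omega
      · simp [GridSeg.pts, hd, hh] at hp
        have := rank_lt_card (Sy R) (coord_mem_Sy R hd hh)
        omega
    · -- both nondegenerate
      have key : ∀ q ∈ (R.bus b).pts, q ∈ (R.bus b').pts → False := fun q h1 h2 =>
        Set.disjoint_left.mp (R.bus_disjoint b b' hne) h1 h2
      cases hh : (R.bus b).horiz <;> cases hh' : (R.bus b').horiz
      · -- both vertical
        simp [GridSeg.pts, hd, hh] at hp
        simp [GridSeg.pts, hd', hh'] at hp'
        obtain ⟨e1, e2, e3⟩ := hp
        obtain ⟨f1, f2, f3⟩ := hp'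
        have hkk : (R.bus b).coord = (R.bus b').coord :=
          eq_of_rank_eq _ (coord_mem_Sx R hd hh) (coord_mem_Sx R hd' hh') (e1 ▸ f1 ▸ rfl)
        have h1 : (R.bus b).lo ≤ (R.bus b').hi :=
          le_of_rank_le _ (hi_mem_Sy R hd' hh') (e2.trans f3)
        have h2 : (R.bus b').lo ≤ (R.bus b).hi :=
          le_of_rank_le _ (hi_mem_Sy R hd hh) (f2.trans e3)
        refine key ((R.bus b).coord, max (R.bus b).lo (R.bus b').lo) ?_ ?_ <;>
          simp [GridSeg.pts, hh, hh'] <;> omega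
      · -- b vertical, b' horizontal
        simp [GridSeg.pts, hd, hh] at hp
        simp [GridSeg.pts, hd', hh'] at hp'
        obtain ⟨e1, e2, e3⟩ := hp
        obtain ⟨f1, f2, f3⟩ := hp'
        have h1 : (R.bus b').lo ≤ (R.bus b).coord :=
          le_of_rank_le _ (coord_mem_Sx R hd hh) (e1 ▸ f2)
        have h2 : (R.bus b).coord ≤ (R.bus b').hi :=
          le_of_rank_le _ (hi_mem_Sx R hd' hh') (e1 ▸ f3)
        have h3 : (R.bus b).lo ≤ (R.bus b').coord :=
          le_of_rank_le _ (coord_mem_Sy R hd' hh') (f1 ▸ e2)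
        have h4 : (R.bus b').coord ≤ (R.bus b).hi :=
          le_of_rank_le _ (hi_mem_Sy R hd hh) (f1 ▸ e3)
        refine key ((R.bus b).coord, (R.bus b').coord) ?_ ?_ <;>
          simp [GridSeg.pts, hh, hh'] <;> omega
      · -- b horizontal, b' vertical
        simp [GridSeg.pts, hd, hh] at hp
        simp [GridSeg.pts, hd', hh'] at hp'
        obtain ⟨e1, e2, e3⟩ := hp
        obtain ⟨f1, f2, f3⟩ := hp'
        have h1 : (R.bus b).lo ≤ (R.bus b').coord :=
          le_of_rank_le _ (coord_mem_Sx R hd' hh') (f1 ▸ e2)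
        have h2 : (R.bus b').coord ≤ (R.bus b).hi :=
          le_of_rank_le _ (hi_mem_Sx R hd hh) (f1 ▸ e3)
        have h3 : (R.bus b').lo ≤ (R.bus b).coord :=
          le_of_rank_le _ (coord_mem_Sy R hd hh) (e1 ▸ f2)
        have h4 : (R.bus b).coord ≤ (R.bus b').hi :=
          le_of_rank_le _ (hi_mem_Sy R hd' hh') (e1 ▸ f3)
        refine key ((R.bus b').coord, (R.bus b).coord) ?_ ?_ <;>
          simp [GridSeg.pts, hh, hh'] <;> omega
      · -- both horizontal
        simp [GridSeg.pts, hd, hh] at hp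
        simp [GridSeg.pts, hd', hh'] at hp'
        obtain ⟨e1, e2, e3⟩ := hp
        obtain ⟨f1, f2, f3⟩ := hp'
        have hkk : (R.bus b).coord = (R.bus b').coord :=
          eq_of_rank_eq _ (coord_mem_Sy R hd hh) (coord_mem_Sy R hd' hh') (e1 ▸ f1 ▸ rfl)
        have h1 : (R.bus b).lo ≤ (R.bus b').hi :=
          le_of_rank_le _ (hi_mem_Sx R hd' hh') (e2.trans f3)
        have h2 : (R.bus b').lo ≤ (R.bus b).hi :=
          le_of_rank_le _ (hi_mem_Sx R hd hh) (f2.trans e3)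
        refine key (max (R.bus b).lo (R.bus b').lo, (R.bus b).coord) ?_ ?_ <;>
          simp [GridSeg.pts, hh, hh'] <;> omega
  conn_inj := by
    intro c c' h
    have h1 : rank (Sx R) (R.conn c).1 = rank (Sx R) (R.conn c').1 := congrArg Prod.fst h
    have h2 : rank (Sy R) (R.conn c).2 = rank (Sy R) (R.conn c').2 := congrArg Prod.snd h
    exact R.conn_inj (Prod.ext_iff.mpr
      ⟨eq_of_rank_eq _ (connx_mem R c) (connx_mem R c') h1,
       eq_of_rank_eq _ (conny_mem R c) (conny_mem R c') h2⟩)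
  conn_off_bus := by
    intro c b hp
    by_cases hd : (R.bus b).hi < (R.bus b).lo
    · simp [GridSeg.pts, hd] at hp
      have := rank_lt_card (Sy R) (conny_mem R c)
      omega
    · cases hh : (R.bus b).horiz
      · simp [GridSeg.pts, hd, hh] at hp
        obtain ⟨e1, e2, e3⟩ := hp
        refine R.conn_off_bus c b ?_
        simp [GridSeg.pts, hh]
        refine ⟨eq_of_rank_eq _ (connx_mem R c) (coord_mem_Sx R hd hh) e1,
          le_of_rank_le _ (conny_mem R c) e2,
          le_of_rank_le _ (hi_mem_Sy R hd hh) e3⟩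
      · simp [GridSeg.pts, hd, hh] at hp
        obtain ⟨e1, e2, e3⟩ := hp
        refine R.conn_off_bus c b ?_
        simp [GridSeg.pts, hh]
        refine ⟨eq_of_rank_eq _ (conny_mem R c) (coord_mem_Sy R hd hh) e1,
          le_of_rank_le _ (connx_mem R c) e2,
          le_of_rank_le _ (hi_mem_Sx R hd hh) e3⟩
  edge_foot := by
    intro c b hb
    have hd : ¬ (R.bus b).hi < (R.bus b).lo := fun h => not_adj_of_deg R h hb
    have hold := R.edge_foot c b hb
    cases hh : (R.bus b).horiz
    · simp [GridSeg.pts, foot, hh] at hold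
      simp [GridSeg.pts, foot, hd, hh]
      exact ⟨rank_mono _ hold.1, rank_mono _ hold.2⟩
    · simp [GridSeg.pts, foot, hh] at hold
      simp [GridSeg.pts, foot, hd, hh]
      exact ⟨rank_mono _ hold.1, rank_mono _ hold.2⟩
  edge_avoids_bus := by
    intro c b hb b' p hp hp'
    have hd : ¬ (R.bus b).hi < (R.bus b).lo := fun h => not_adj_of_deg R h hb
    by_cases hd' : (R.bus b').hi < (R.bus b').lo
    · exfalso
      simp [GridSeg.pts, hd'] at hp'
      cases hh : (R.bus b).horiz
      · simp [edgePts, -inf_le_iff, -le_sup_iff, hd, hh] at hp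
        have := rank_lt_card (Sy R) (conny_mem R c)
        omega
      · simp [edgePts, -inf_le_iff, -le_sup_iff, hd, hh] at hp
        have h1 := rank_lt_card (Sy R) (conny_mem R c)
        have h2 := rank_lt_card (Sy R) (coord_mem_Sy R hd hh)
        omega
    · cases hh : (R.bus b).horiz <;> cases hh' : (R.bus b').horiz
      · -- b vertical, b' vertical
        simp [edgePts, -inf_le_iff, -le_sup_iff, hd, hh] at hp
        simp [GridSeg.pts, hd', hh'] at hp'
        obtain ⟨e1, e2, e3⟩ := hp
        obtain ⟨f1, f2, f3⟩ := hp'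
        have h1 : min (R.conn c).1 (R.bus b).coord ≤ (R.bus b').coord :=
          le_of_rank_le _ (coord_mem_Sx R hd' hh')
            (by rw [rank_map_min]; exact f1 ▸ e2)
        have h2 : (R.bus b').coord ≤ max (R.conn c).1 (R.bus b).coord :=
          le_of_rank_le _ (max_mem (connx_mem R c) (coord_mem_Sx R hd hh))
            (by rw [rank_map_max]; exact f1 ▸ e3)
        have h3 : (R.bus b').lo ≤ (R.conn c).2 :=
          le_of_rank_le _ (conny_mem R c) (e1 ▸ f2)
        have h4 : (R.conn c).2 ≤ (R.bus b').hi :=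
          le_of_rank_le _ (hi_mem_Sy R hd' hh') (e1 ▸ f3)
        refine R.edge_avoids_bus c b hb b' ((R.bus b').coord, (R.conn c).2) ?_ ?_
        · simp [edgePts, -inf_le_iff, -le_sup_iff, hh]; omega
        · simp [GridSeg.pts, hh']; omega
      · -- b vertical, b' horizontal
        simp [edgePts, -inf_le_iff, -le_sup_iff, hd, hh] at hp
        simp [GridSeg.pts, hd', hh'] at hp'
        obtain ⟨e1, e2, e3⟩ := hp
        obtain ⟨f1, f2, f3⟩ := hp'
        have hc2 : (R.conn c).2 = (R.bus b').coord :=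
          eq_of_rank_eq _ (conny_mem R c) (coord_mem_Sy R hd' hh') (e1 ▸ f1 ▸ rfl)
        have h1 : (R.bus b').lo ≤ max (R.conn c).1 (R.bus b).coord :=
          le_of_rank_le _ (max_mem (connx_mem R c) (coord_mem_Sx R hd hh))
            (by rw [rank_map_max]; exact f2.trans e3)
        have h2 : min (R.conn c).1 (R.bus b).coord ≤ (R.bus b').hi :=
          le_of_rank_le _ (hi_mem_Sx R hd' hh')
            (by rw [rank_map_min]; exact e2.trans f3)
        refine R.edge_avoids_bus c b hb b'
          (max (R.bus b').lo (min (R.conn c).1 (R.bus b).coord), (R.conn c).2) ?_ ?_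
        · simp [edgePts, -inf_le_iff, -le_sup_iff, hh]; omega
        · simp [GridSeg.pts, hh']; omega
      · -- b horizontal, b' vertical
        simp [edgePts, -inf_le_iff, -le_sup_iff, hd, hh] at hp
        simp [GridSeg.pts, hd', hh'] at hp'
        obtain ⟨e1, e2, e3⟩ := hp
        obtain ⟨f1, f2, f3⟩ := hp'
        have hc1 : (R.conn c).1 = (R.bus b').coord :=
          eq_of_rank_eq _ (connx_mem R c) (coord_mem_Sx R hd' hh') (e1 ▸ f1 ▸ rfl)
        have h1 : (R.bus b').lo ≤ max (R.conn c).2 (R.bus b).coord :=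
          le_of_rank_le _ (max_mem (conny_mem R c) (coord_mem_Sy R hd hh))
            (by rw [rank_map_max]; exact f2.trans e3)
        have h2 : min (R.conn c).2 (R.bus b).coord ≤ (R.bus b').hi :=
          le_of_rank_le _ (hi_mem_Sy R hd' hh')
            (by rw [rank_map_min]; exact e2.trans f3)
        refine R.edge_avoids_bus c b hb b'
          ((R.conn c).1, max (R.bus b').lo (min (R.conn c).2 (R.bus b).coord)) ?_ ?_
        · simp [edgePts, -inf_le_iff, -le_sup_iff, hh]; omega
        · simp [GridSeg.pts, hh']; omega
      · -- b horizontal, b' horizontal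
        simp [edgePts, -inf_le_iff, -le_sup_iff, hd, hh] at hp
        simp [GridSeg.pts, hd', hh'] at hp'
        obtain ⟨e1, e2, e3⟩ := hp
        obtain ⟨f1, f2, f3⟩ := hp'
        have h1 : min (R.conn c).2 (R.bus b).coord ≤ (R.bus b').coord :=
          le_of_rank_le _ (coord_mem_Sy R hd' hh')
            (by rw [rank_map_min]; exact f1 ▸ e2)
        have h2 : (R.bus b').coord ≤ max (R.conn c).2 (R.bus b).coord :=
          le_of_rank_le _ (max_mem (conny_mem R c) (coord_mem_Sy R hd hh))
            (by rw [rank_map_max]; exact f1 ▸ e3)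
        have h3 : (R.bus b').lo ≤ (R.conn c).1 :=
          le_of_rank_le _ (connx_mem R c) (e1 ▸ f2)
        have h4 : (R.conn c).1 ≤ (R.bus b').hi :=
          le_of_rank_le _ (hi_mem_Sx R hd' hh') (e1 ▸ f3)
        refine R.edge_avoids_bus c b hb b' ((R.conn c).1, (R.bus b').coord) ?_ ?_
        · simp [edgePts, -inf_le_iff, -le_sup_iff, hh]; omega
        · simp [GridSeg.pts, hh']; omega
  edge_avoids_conn := by
    intro c b hb c' hp
    have hd : ¬ (R.bus b).hi < (R.bus b).lo := fun h => not_adj_of_deg R h hb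
    cases hh : (R.bus b).horiz
    · simp [edgePts, -inf_le_iff, -le_sup_iff, hd, hh] at hp
      obtain ⟨e1, e2, e3⟩ := hp
      refine R.edge_avoids_conn c b hb c' ?_
      simp [edgePts, -inf_le_iff, -le_sup_iff, hh]
      refine ⟨eq_of_rank_eq _ (conny_mem R c') (conny_mem R c) e1,
        le_of_rank_le _ (connx_mem R c') (by rw [rank_map_min]; exact e2),
        le_of_rank_le _ (max_mem (connx_mem R c) (coord_mem_Sx R hd hh))
          (by rw [rank_map_max]; exact e3)⟩
    · simp [edgePts, -inf_le_iff, -le_sup_iff, hd, hh] at hp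
      obtain ⟨e1, e2, e3⟩ := hp
      refine R.edge_avoids_conn c b hb c' ?_
      simp [edgePts, -inf_le_iff, -le_sup_iff, hh]
      refine ⟨eq_of_rank_eq _ (connx_mem R c') (connx_mem R c) e1,
        le_of_rank_le _ (conny_mem R c') (by rw [rank_map_min]; exact e2),
        le_of_rank_le _ (max_mem (conny_mem R c) (coord_mem_Sy R hd hh))
          (by rw [rank_map_max]; exact e3)⟩

end Compress

end BusCompact

/-- Compaction: if a finite bus graph admits a grid realization, then it
admits one in which all event points (connector points and bus endpoints)
have both coordinates in {0, 1, ..., N−1}, where N = |C| + 2|B| is the total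
number of event points. This yields a polynomial-size certificate, so Bus
Graph Realizability is in NP. -/
theorem compact_realization
    {B C : Type} [Fintype B] [Fintype C] (adj : C → Finset B)
    (h : Nonempty (Realization adj)) :
    ∃ R : Realization adj,
      (∀ c : C,
        0 ≤ (R.conn c).1 ∧ (R.conn c).1 ≤ (Fintype.card C + 2 * Fintype.card B : ℤ) - 1 ∧
        0 ≤ (R.conn c).2 ∧ (R.conn c).2 ≤ (Fintype.card C + 2 * Fintype.card B : ℤ) - 1) ∧
      (∀ b : B,
        0 ≤ (R.bus b).lo ∧ (R.bus b).lo ≤ (R.bus b).hi ∧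
        (R.bus b).hi ≤ (Fintype.card C + 2 * Fintype.card B : ℤ) - 1 ∧
        0 ≤ (R.bus b).coord ∧
        (R.bus b).coord ≤ (Fintype.card C + 2 * Fintype.card B : ℤ) - 1) := by
  obtain ⟨R⟩ := h
  refine ⟨BusCompact.compress R, fun c => ?_, fun b => ?_⟩
  · have e : (BusCompact.compress R).conn c =
        (BusCompact.rank (BusCompact.Sx R) (R.conn c).1,
         BusCompact.rank (BusCompact.Sy R) (R.conn c).2) := rfl
    rw [e]
    have h1 := BusCompact.rank_nonneg (BusCompact.Sx R) (R.conn c).1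
    have h2 := BusCompact.rank_lt_card (BusCompact.Sx R) (BusCompact.connx_mem R c)
    have h3 := BusCompact.card_Sx_le R
    have h4 := BusCompact.rank_nonneg (BusCompact.Sy R) (R.conn c).2
    have h5 := BusCompact.rank_lt_card (BusCompact.Sy R) (BusCompact.conny_mem R c)
    have h6 := BusCompact.card_Sy_le R
    refine ⟨h1, ?_, h4, ?_⟩ <;> omega
  · have e : (BusCompact.compress R).bus b =
        (if (R.bus b).hi < (R.bus b).lo then
          ⟨true, ((BusCompact.Sy R).card : ℤ), ((Fintype.equivFin B b : ℕ) : ℤ),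
            ((Fintype.equivFin B b : ℕ) : ℤ)⟩
        else if (R.bus b).horiz then
          ⟨true, BusCompact.rank (BusCompact.Sy R) (R.bus b).coord,
            BusCompact.rank (BusCompact.Sx R) (R.bus b).lo,
            BusCompact.rank (BusCompact.Sx R) (R.bus b).hi⟩
        else
          ⟨false, BusCompact.rank (BusCompact.Sx R) (R.bus b).coord,
            BusCompact.rank (BusCompact.Sy R) (R.bus b).lo,
            BusCompact.rank (BusCompact.Sy R) (R.bus b).hi⟩ : GridSeg) := rfl
    rw [e]
    by_cases hd : (R.bus b).hi < (R.bus b).lo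
    · rw [if_pos hd]
      have hidx : (Fintype.equivFin B b : ℕ) < Fintype.card B := (Fintype.equivFin B b).isLt
      have hS := BusCompact.card_Sy_add_two_le R hd
      refine ⟨?_, ?_, ?_, ?_, ?_⟩ <;> (try simp) <;> omega
    · rw [if_neg hd]
      have hlh := not_lt.mp hd
      cases hh : (R.bus b).horiz
      · simp only [hh, Bool.false_eq_true, if_false]
        have h1 := BusCompact.rank_nonneg (BusCompact.Sy R) (R.bus b).lo
        have h2 := BusCompact.rank_lt_card (BusCompact.Sy R) (BusCompact.hi_mem_Sy R hd hh)
        have h3 := BusCompact.card_Sy_le R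
        have h4 := BusCompact.rank_nonneg (BusCompact.Sx R) (R.bus b).coord
        have h5 := BusCompact.rank_lt_card (BusCompact.Sx R) (BusCompact.coord_mem_Sx R hd hh)
        have h6 := BusCompact.card_Sx_le R
        have h7 := BusCompact.rank_mono (BusCompact.Sy R) hlh
        refine ⟨?_, ?_, ?_, ?_, ?_⟩ <;> (try simp) <;> omega
      · simp only [hh, if_true]
        have h1 := BusCompact.rank_nonneg (BusCompact.Sx R) (R.bus b).lo
        have h2 := BusCompact.rank_lt_card (BusCompact.Sx R) (BusCompact.hi_mem_Sx R hd hh)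
        have h3 := BusCompact.card_Sx_le R
        have h4 := BusCompact.rank_nonneg (BusCompact.Sy R) (R.bus b).coord
        have h5 := BusCompact.rank_lt_card (BusCompact.Sy R) (BusCompact.coord_mem_Sy R hd hh)
        have h6 := BusCompact.card_Sy_le R
        have h7 := BusCompact.rank_mono (BusCompact.Sx R) hlh
        refine ⟨?_, ?_, ?_, ?_, ?_⟩ <;> (try simp) <;> omega
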